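/- For 0<q<1 and ν>-1 with ν not an integer, the q-Wronskian constant of j_ν and γ_ν equals q^{-2ν}-1; that is, for all x in ℝ_q, x^{2ν}[j_ν(x;q²)γ_ν(qx) - j_ν(qx;q²)γ_ν(x)] = q^{-2ν}-1, where γ_ν(x) = x^{-2ν}j_{-ν}(q^{-ν}x;q²). -/

import Mathlib

open scoped BigOperators

noncomputable def qPochR (q a : ℝ) (n : ℕ) : ℝ := ∏ i ∈ Finset.range n, (1 - a * q ^ i)

/-- Normalized Hahn–Exton q-Bessel function `j_α(x;q²)` (real version). -/
noncomputable def jR (q α x : ℝ) : ℝ :=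
  ∑' n : ℕ, (-1) ^ n * q ^ (n * (n + 1)) * x ^ (2 * n) /
    (qPochR (q ^ 2) (q ^ 2) n * qPochR (q ^ 2) (q ^ (2 * α + 2)) n)

/-- `γ_ν(x) = x^{-2ν} j_{-ν}(q^{-ν} x; q²)`. -/
noncomputable def gammaR (q ν x : ℝ) : ℝ := x ^ (-(2 * ν)) * jR q (-ν) (q ^ (-ν) * x)

namespace Stmt3Aux

open Filter

/-- Coefficients of `jR` as a power series in `x^2`. -/
noncomputable def aC (q α : ℝ) (m : ℕ) : ℝ :=
  (-1) ^ m * q ^ (m * (m + 1)) / (qPochR (q ^ 2) (q ^ 2) m * qPochR (q ^ 2) (q ^ (2 * α + 2)) m)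

variable {q α : ℝ}

lemma p_pos (hq0 : 0 < q) : 0 < q ^ 2 := by positivity

lemma p_lt_one (hq0 : 0 < q) (hq1 : q < 1) : q ^ 2 < 1 := by nlinarith

lemma poch_p_ne (hq0 : 0 < q) (hq1 : q < 1) (m : ℕ) : qPochR (q ^ 2) (q ^ 2) m ≠ 0 := by
  unfold qPochR
  rw [Finset.prod_ne_zero_iff]
  intro i _
  have h0 : (0:ℝ) < q ^ 2 := p_pos hq0
  have h1 : q ^ 2 < 1 := p_lt_one hq0 hq1
  have h2 : (q ^ 2) ^ i ≤ 1 := pow_le_one₀ h0.le h1.le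
  have : q ^ 2 * (q ^ 2) ^ i < 1 := by nlinarith [pow_pos h0 i]
  intro hc
  nlinarith

lemma poch_t_ne (hτ : ∀ i : ℕ, q ^ (2 * α + 2) * (q ^ 2) ^ i ≠ 1) (m : ℕ) :
    qPochR (q ^ 2) (q ^ (2 * α + 2)) m ≠ 0 := by
  unfold qPochR
  rw [Finset.prod_ne_zero_iff]
  intro i _
  exact sub_ne_zero.2 fun h => hτ i h.symm

lemma aC_zero : aC q α 0 = 1 := by simp [aC, qPochR]

lemma aC_rec (hq0 : 0 < q) (hq1 : q < 1) (hτ : ∀ i : ℕ, q ^ (2 * α + 2) * (q ^ 2) ^ i ≠ 1)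
    (m : ℕ) :
    aC q α (m + 1) * ((1 - (q ^ 2) ^ (m + 1)) * (1 - q ^ (2 * α + 2) * (q ^ 2) ^ m)) =
      -((q ^ 2) ^ (m + 1)) * aC q α m := by
  have e1 : qPochR (q ^ 2) (q ^ 2) (m + 1)
      = qPochR (q ^ 2) (q ^ 2) m * (1 - q ^ 2 * (q ^ 2) ^ m) := Finset.prod_range_succ _ _
  have e2 : qPochR (q ^ 2) (q ^ (2 * α + 2)) (m + 1)
      = qPochR (q ^ 2) (q ^ (2 * α + 2)) m * (1 - q ^ (2 * α + 2) * (q ^ 2) ^ m) :=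
    Finset.prod_range_succ _ _
  have hx : (q:ℝ) ^ ((m + 1) * (m + 1 + 1)) = q ^ (m * (m + 1)) * (q ^ 2) ^ (m + 1) := by
    rw [← pow_mul, ← pow_add]
    congr 1
    ring
  have h1 := poch_p_ne hq0 hq1 m
  have h2 := poch_t_ne hτ m
  have h3 : 1 - q ^ 2 * (q ^ 2) ^ m ≠ 0 := by
    have h2' := poch_p_ne hq0 hq1 (m + 1)
    rw [e1, mul_ne_zero_iff] at h2'
    exact h2'.2
  have h4 : 1 - q ^ (2 * α + 2) * (q ^ 2) ^ m ≠ 0 := sub_ne_zero.2 fun h => hτ m h.symm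
  have hps : (q ^ 2 : ℝ) ^ (m + 1) = q ^ 2 * (q ^ 2) ^ m := by rw [pow_succ]; ring
  unfold aC
  rw [e1, e2, hx, hps]
  set A := 1 - q ^ 2 * (q ^ 2) ^ m with hA
  set B := 1 - q ^ (2 * α + 2) * (q ^ 2) ^ m with hB
  field_simp
  ring

lemma jR_eq (q α x : ℝ) : jR q α x = ∑' m : ℕ, aC q α m * x ^ (2 * m) := by
  unfold jR aC
  exact tsum_congr fun n => by ring

lemma summable_aC (hq0 : 0 < q) (hq1 : q < 1)
    (hτ : ∀ i : ℕ, q ^ (2 * α + 2) * (q ^ 2) ^ i ≠ 1) (x : ℝ) :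
    Summable (fun m => aC q α m * x ^ (2 * m)) := by
  have hp0 : (0:ℝ) < q ^ 2 := by positivity
  have hp1 : q ^ 2 < 1 := by nlinarith
  set p : ℝ := q ^ 2 with hp
  set τ : ℝ := q ^ (2 * α + 2) with hτdef
  have hpow : Tendsto (fun m : ℕ => p ^ m) atTop (nhds 0) :=
    tendsto_pow_atTop_nhds_zero_of_lt_one hp0.le hp1
  have h1 : Tendsto (fun m : ℕ => p ^ (m + 1) * x ^ 2) atTop (nhds 0) := by
    have h := hpow.mul_const (p * x ^ 2)
    rw [zero_mul] at h
    refine h.congr fun m => ?_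
    rw [pow_succ]; ring
  have h2 : Tendsto (fun m : ℕ => |(1 - p ^ (m + 1)) * (1 - τ * p ^ m)|) atTop (nhds 1) := by
    have ha : Tendsto (fun m : ℕ => 1 - p ^ (m + 1)) atTop (nhds 1) := by
      have := (hpow.mul_const p).const_sub 1
      rw [zero_mul, sub_zero] at this
      refine this.congr fun m => ?_
      rw [pow_succ]
    have hb : Tendsto (fun m : ℕ => 1 - τ * p ^ m) atTop (nhds 1) := by
      have := (hpow.const_mul τ).const_sub 1
      rw [mul_zero, sub_zero] at this
      exact this
    have := (ha.mul hb).abs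
    rw [one_mul, abs_one] at this
    exact this
  have hA : ∀ᶠ m : ℕ in atTop, p ^ (m + 1) * x ^ 2 ≤ 1 / 4 :=
    h1.eventually (eventually_le_nhds (by norm_num))
  have hB : ∀ᶠ m : ℕ in atTop, 1 / 2 ≤ |(1 - p ^ (m + 1)) * (1 - τ * p ^ m)| :=
    h2.eventually (eventually_ge_nhds (by norm_num))
  refine summable_of_ratio_norm_eventually_le (r := 1 / 2) (by norm_num) ?_
  filter_upwards [hA, hB] with m hAm hBm
  have hrec := aC_rec hq0 hq1 hτ m
  have habs : |aC q α (m + 1)| * |(1 - p ^ (m + 1)) * (1 - τ * p ^ m)|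
      = p ^ (m + 1) * |aC q α m| := by
    have := congrArg abs hrec
    rwa [abs_mul, abs_mul, abs_mul, abs_neg, abs_pow, abs_of_pos hp0, ← abs_mul] at this
  have hxm : ∀ k : ℕ, ‖aC q α k * x ^ (2 * k)‖ = |aC q α k| * (x ^ 2) ^ k := by
    intro k
    rw [Real.norm_eq_abs, abs_mul, pow_mul, abs_pow, abs_of_nonneg (sq_nonneg x)]
  rw [hxm, hxm]
  have hx2 : ((x:ℝ) ^ 2) ^ (m + 1) = (x ^ 2) ^ m * x ^ 2 := pow_succ _ _
  rw [hx2]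
  have hD : (0:ℝ) < |(1 - p ^ (m + 1)) * (1 - τ * p ^ m)| := lt_of_lt_of_le (by norm_num) hBm
  have hnn1 : (0:ℝ) ≤ |aC q α (m + 1)| * ((x ^ 2) ^ m * x ^ 2) := by positivity
  have hnn2 : (0:ℝ) ≤ |aC q α m| * (x ^ 2) ^ m := by positivity
  nlinarith [mul_le_mul_of_nonneg_right hBm hnn1,
    mul_le_mul_of_nonneg_right hAm hnn2,
    congrArg (fun y => y * ((x ^ 2) ^ m * x ^ 2)) habs,
    mul_nonneg (abs_nonneg (aC q α m)) (pow_nonneg (sq_nonneg x) m)]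

lemma keyEq (hq0 : 0 < q) (hq1 : q < 1)
    (hτ : ∀ i : ℕ, q ^ (2 * α + 2) * (q ^ 2) ^ i ≠ 1) (t x : ℝ)
    (ht : q ^ (2 * α + 2) = t * q ^ 2) :
    jR q α x + (q ^ 2 * x ^ 2 - 1 - t) * jR q α (q * x) + t * jR q α (q ^ 2 * x) = 0 := by
  have e2 : ∀ m : ℕ, aC q α m * (q * x) ^ (2 * m) = aC q α m * ((q ^ 2) ^ m * x ^ (2 * m)) := by
    intro m; rw [mul_pow, pow_mul]
  have e3 : ∀ m : ℕ, aC q α m * (q ^ 2 * x) ^ (2 * m)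
      = aC q α m * ((q ^ 2) ^ m * (q ^ 2) ^ m * x ^ (2 * m)) := by
    intro m
    have hqq : ((q ^ 2 : ℝ)) ^ (2 * m) = (q ^ 2) ^ m * (q ^ 2) ^ m := by
      rw [two_mul, pow_add]
    rw [mul_pow, hqq]
  have hjx := jR_eq q α x
  have hjq : jR q α (q * x) = ∑' m : ℕ, aC q α m * ((q ^ 2) ^ m * x ^ (2 * m)) := by
    rw [jR_eq]; exact tsum_congr e2
  have hjq2 : jR q α (q ^ 2 * x)
      = ∑' m : ℕ, aC q α m * ((q ^ 2) ^ m * (q ^ 2) ^ m * x ^ (2 * m)) := by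
    rw [jR_eq]; exact tsum_congr e3
  have s1 : Summable (fun m => aC q α m * x ^ (2 * m)) := summable_aC hq0 hq1 hτ x
  have s2 : Summable (fun m => aC q α m * ((q ^ 2) ^ m * x ^ (2 * m))) :=
    (summable_aC hq0 hq1 hτ (q * x)).congr e2
  have s3 : Summable (fun m => aC q α m * ((q ^ 2) ^ m * (q ^ 2) ^ m * x ^ (2 * m))) :=
    (summable_aC hq0 hq1 hτ (q ^ 2 * x)).congr e3
  have hKsum : Summable (fun m => (aC q α m * x ^ (2 * m)
      - (1 + t) * (aC q α m * ((q ^ 2) ^ m * x ^ (2 * m))))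
      + t * (aC q α m * ((q ^ 2) ^ m * (q ^ 2) ^ m * x ^ (2 * m)))) :=
    (s1.sub (s2.mul_left (1 + t))).add (s3.mul_left t)
  have hKshift : ∀ m : ℕ, (aC q α (m + 1) * x ^ (2 * (m + 1))
      - (1 + t) * (aC q α (m + 1) * ((q ^ 2) ^ (m + 1) * x ^ (2 * (m + 1)))))
      + t * (aC q α (m + 1) * ((q ^ 2) ^ (m + 1) * (q ^ 2) ^ (m + 1) * x ^ (2 * (m + 1))))
      = -(q ^ 2 * x ^ 2 * (aC q α m * ((q ^ 2) ^ m * x ^ (2 * m)))) := by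
    intro m
    have hrec := aC_rec hq0 hq1 hτ m
    linear_combination x ^ (2 * (m + 1)) * hrec
      + aC q α (m + 1) * x ^ (2 * (m + 1)) * (1 - (q ^ 2) ^ (m + 1)) * (q ^ 2) ^ m * ht
  have hsplit : (∑' m : ℕ, ((aC q α m * x ^ (2 * m)
      - (1 + t) * (aC q α m * ((q ^ 2) ^ m * x ^ (2 * m))))
      + t * (aC q α m * ((q ^ 2) ^ m * (q ^ 2) ^ m * x ^ (2 * m)))))
      = -((q ^ 2 * x ^ 2) * jR q α (q * x)) := by
    rw [Summable.tsum_eq_zero_add hKsum]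
    have h0 : (aC q α 0 * x ^ (2 * 0)
        - (1 + t) * (aC q α 0 * ((q ^ 2) ^ 0 * x ^ (2 * 0))))
        + t * (aC q α 0 * ((q ^ 2) ^ 0 * (q ^ 2) ^ 0 * x ^ (2 * 0))) = 0 := by
      simp only [pow_zero, mul_zero, one_mul, mul_one]
      ring
    rw [h0, zero_add]
    have : (∑' m : ℕ, ((aC q α (m + 1) * x ^ (2 * (m + 1))
        - (1 + t) * (aC q α (m + 1) * ((q ^ 2) ^ (m + 1) * x ^ (2 * (m + 1)))))
        + t * (aC q α (m + 1) * ((q ^ 2) ^ (m + 1) * (q ^ 2) ^ (m + 1) * x ^ (2 * (m + 1))))))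
        = ∑' m : ℕ, -(q ^ 2 * x ^ 2 * (aC q α m * ((q ^ 2) ^ m * x ^ (2 * m)))) :=
      tsum_congr hKshift
    rw [this, tsum_neg, hjq, tsum_mul_left]
  have hKt : (∑' m : ℕ, ((aC q α m * x ^ (2 * m)
      - (1 + t) * (aC q α m * ((q ^ 2) ^ m * x ^ (2 * m))))
      + t * (aC q α m * ((q ^ 2) ^ m * (q ^ 2) ^ m * x ^ (2 * m)))))
      = jR q α x - (1 + t) * jR q α (q * x) + t * jR q α (q ^ 2 * x) := by
    rw [Summable.tsum_add (s1.sub (s2.mul_left (1 + t))) (s3.mul_left t),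
      Summable.tsum_sub s1 (s2.mul_left (1 + t)), tsum_mul_left, tsum_mul_left,
      ← hjx, ← hjq, ← hjq2]
  rw [hKt] at hsplit
  linear_combination hsplit

set_option maxHeartbeats 1000000 in
lemma jR_sub_one_bound (hq0 : 0 < q) (hq1 : q < 1)
    (hτ : ∀ i : ℕ, q ^ (2 * α + 2) * (q ^ 2) ^ i ≠ 1) :
    ∃ C : ℝ, ∀ y : ℝ, |y| ≤ 1 → |jR q α y - 1| ≤ C * y ^ 2 := by
  have hs1 : Summable (fun m => aC q α m * (1 : ℝ) ^ (2 * m)) := summable_aC hq0 hq1 hτ 1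
  have hsabs : Summable (fun m => |aC q α m|) := by simpa using hs1.abs
  have hsC : Summable (fun m => |aC q α (m + 1)|) := (summable_nat_add_iff 1).2 hsabs
  refine ⟨∑' m : ℕ, |aC q α (m + 1)|, fun y hy => ?_⟩
  have hsum := summable_aC hq0 hq1 hτ y
  have hshift : Summable (fun m => aC q α (m + 1) * y ^ (2 * (m + 1))) :=
    (summable_nat_add_iff 1).2 hsum
  have h1 : jR q α y - 1 = ∑' m : ℕ, aC q α (m + 1) * y ^ (2 * (m + 1)) := by
    rw [jR_eq, Summable.tsum_eq_zero_add hsum, aC_zero]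
    simp
  rw [h1]
  have hterm : ∀ m : ℕ, |aC q α (m + 1) * y ^ (2 * (m + 1))| ≤ |aC q α (m + 1)| * y ^ 2 := by
    intro m
    rw [abs_mul, pow_mul, abs_pow, abs_of_nonneg (sq_nonneg y)]
    have hy2 : y ^ 2 ≤ 1 := by nlinarith [abs_nonneg y, sq_abs y]
    have h2 : (y ^ 2) ^ (m + 1) ≤ y ^ 2 := by
      calc (y ^ 2) ^ (m + 1) = (y ^ 2) ^ m * y ^ 2 := pow_succ _ _
        _ ≤ 1 * y ^ 2 := by
            have := pow_le_one₀ (sq_nonneg y) hy2 (n := m)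
            nlinarith [sq_nonneg y]
        _ = y ^ 2 := one_mul _
    exact mul_le_mul_of_nonneg_left h2 (abs_nonneg _)
  calc |∑' m : ℕ, aC q α (m + 1) * y ^ (2 * (m + 1))|
      ≤ ∑' m : ℕ, |aC q α (m + 1) * y ^ (2 * (m + 1))| := by
        have hnorm := norm_tsum_le_tsum_norm
          (f := fun m : ℕ => aC q α (m + 1) * y ^ (2 * (m + 1))) (by simpa only [Real.norm_eq_abs] using hshift.abs)
        simpa only [Real.norm_eq_abs] using hnorm
    _ ≤ ∑' m : ℕ, |aC q α (m + 1)| * y ^ 2 :=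
        Summable.tsum_le_tsum hterm hshift.abs (hsC.mul_right _)
    _ = (∑' m : ℕ, |aC q α (m + 1)|) * y ^ 2 := tsum_mul_right

lemma tendsto_jR (hq0 : 0 < q) (hq1 : q < 1)
    (hτ : ∀ i : ℕ, q ^ (2 * α + 2) * (q ^ 2) ^ i ≠ 1)
    (g : ℕ → ℝ) (c : ℝ) (hg : ∀ k, g k = c * q ^ k) :
    Tendsto (fun k : ℕ => jR q α (g k)) atTop (nhds 1) := by
  obtain ⟨C, hC⟩ := jR_sub_one_bound hq0 hq1 hτ
  have hqlim : Tendsto (fun k : ℕ => q ^ k) atTop (nhds 0) :=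
    tendsto_pow_atTop_nhds_zero_of_lt_one hq0.le hq1
  have hglim : Tendsto g atTop (nhds 0) := by
    have := hqlim.const_mul c
    rw [mul_zero] at this
    exact this.congr fun k => (hg k).symm
  have hg2 : Tendsto (fun k => C * (g k) ^ 2) atTop (nhds 0) := by
    have := ((hglim.mul hglim).const_mul C)
    simpa [pow_two] using this
  have hev : ∀ᶠ k : ℕ in atTop, |g k| ≤ 1 := by
    have := hglim.abs
    rw [abs_zero] at this
    exact this.eventually (eventually_le_nhds (by norm_num))
  have hmain : Tendsto (fun k => jR q α (g k) - 1) atTop (nhds 0) := by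
    apply squeeze_zero_norm' ?_ hg2
    filter_upwards [hev] with k hk
    simpa [Real.norm_eq_abs] using hC (g k) hk
  have := hmain.add_const 1
  rw [zero_add] at this
  exact this.congr fun k => by ring

/-- `q^s ≠ 1` for `s ≠ 0`, `0 < q < 1` (rpow). -/
lemma rpow_ne_one' (hq0 : 0 < q) (hq1 : q < 1) {s : ℝ} (hs : s ≠ 0) : q ^ s ≠ 1 := by
  rcases lt_or_gt_of_ne hs with h | h
  · have : 1 < q ^ s := Real.one_lt_rpow_iff_of_pos hq0 |>.2 (Or.inr ⟨hq1, h⟩)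
    exact ne_of_gt this
  · have : q ^ s < 1 := Real.rpow_lt_one hq0.le hq1 h
    exact ne_of_lt this

lemma hτ_of (hq0 : 0 < q) (hq1 : q < 1) (β : ℝ) (hβ : ∀ i : ℕ, 2 * β + 2 + 2 * i ≠ 0) :
    ∀ i : ℕ, q ^ (2 * β + 2) * (q ^ 2) ^ i ≠ 1 := by
  intro i
  have h1 : ((q : ℝ) ^ 2) ^ i = q ^ ((2 * i : ℕ) : ℝ) := by
    rw [Real.rpow_natCast, pow_mul]
  rw [h1, ← Real.rpow_add hq0]
  apply rpow_ne_one' hq0 hq1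
  have := hβ i
  push_cast at this ⊢
  exact this

end Stmt3Aux

open Stmt3Aux Filter in
theorem stmt3 (q ν : ℝ) (hq0 : 0 < q) (hq1 : q < 1) (hν : -1 < ν)
    (hνnotint : ∀ k : ℤ, ν ≠ (k : ℝ)) :
    ∀ n : ℤ,
      ((q : ℝ) ^ n) ^ (2 * ν) *
        (jR q ν (q ^ n) * gammaR q ν (q * q ^ n) - jR q ν (q * q ^ n) * gammaR q ν (q ^ n)) =
      q ^ (-(2 * ν)) - 1 := by
  have hq0' : (q : ℝ) ≠ 0 := ne_of_gt hq0
  -- the two non-vanishing hypotheses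
  have hτν : ∀ i : ℕ, q ^ (2 * ν + 2) * (q ^ 2) ^ i ≠ 1 := by
    apply hτ_of hq0 hq1
    intro i h
    exact hνnotint (-(1 + i)) (by push_cast; linarith)
  have hτν' : ∀ i : ℕ, q ^ (2 * -ν + 2) * (q ^ 2) ^ i ≠ 1 := by
    apply hτ_of hq0 hq1
    intro i h
    exact hνnotint (1 + i) (by push_cast; linarith)
  -- rpow arithmetic facts
  have hr2 : (q : ℝ) ^ ((2 : ℝ)) = q ^ (2 : ℕ) := by
    rw [show ((2 : ℝ)) = ((2 : ℕ) : ℝ) by norm_num, Real.rpow_natCast]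
  have htν : q ^ (2 * ν + 2) = q ^ (2 * ν) * q ^ 2 := by
    rw [Real.rpow_add hq0, hr2]
  have htν' : q ^ (2 * -ν + 2) = q ^ (-(2 * ν)) * q ^ 2 := by
    rw [show 2 * -ν + 2 = -(2 * ν) + 2 by ring, Real.rpow_add hq0, hr2]
  have htt' : q ^ (2 * ν) * q ^ (-(2 * ν)) = 1 := by
    rw [← Real.rpow_add hq0]
    simp
  have hs2 : ((q : ℝ) ^ (-ν)) ^ (2 : ℕ) = q ^ (-(2 * ν)) := by
    rw [← Real.rpow_natCast (q ^ (-ν)) 2, ← Real.rpow_mul hq0.le]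
    norm_num
    congr 1
    ring
  -- Wronskian step
  have wStep : ∀ x : ℝ,
      q ^ (-(2 * ν)) * jR q ν x * jR q (-ν) (q ^ (-ν) * (q * x))
        - jR q ν (q * x) * jR q (-ν) (q ^ (-ν) * x)
      = q ^ (-(2 * ν)) * jR q ν (q * x) * jR q (-ν) (q ^ (-ν) * (q ^ 2 * x))
        - jR q ν (q ^ 2 * x) * jR q (-ν) (q ^ (-ν) * (q * x)) := by
    intro x
    have hf := keyEq hq0 hq1 hτν (q ^ (2 * ν)) x htν
    have hu := keyEq hq0 hq1 hτν' (q ^ (-(2 * ν))) (q ^ (-ν) * x) htν'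
    rw [show q * (q ^ (-ν) * x) = q ^ (-ν) * (q * x) by ring,
      show q ^ 2 * (q ^ (-ν) * x) = q ^ (-ν) * (q ^ 2 * x) by ring] at hu
    linear_combination (q ^ (-(2 * ν)) * jR q (-ν) (q ^ (-ν) * (q * x))) * hf
      - jR q ν (q * x) * hu
      + ((jR q ν (q * x) - jR q ν (q ^ 2 * x)) * jR q (-ν) (q ^ (-ν) * (q * x))) * htt'
      + (jR q ν (q * x) * jR q (-ν) (q ^ (-ν) * (q * x)) * q ^ (2 : ℕ) * x ^ 2) * hs2
  -- the Wronskian as a function of n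
  have hstep : ∀ m : ℤ,
      q ^ (-(2 * ν)) * jR q ν (q ^ m) * jR q (-ν) (q ^ (-ν) * (q * q ^ m))
        - jR q ν (q * q ^ m) * jR q (-ν) (q ^ (-ν) * q ^ m)
      = q ^ (-(2 * ν)) * jR q ν (q ^ (m + 1)) * jR q (-ν) (q ^ (-ν) * (q * q ^ (m + 1)))
        - jR q ν (q * q ^ (m + 1)) * jR q (-ν) (q ^ (-ν) * q ^ (m + 1)) := by
    intro m
    have hz : (q : ℝ) ^ (m + 1) = q * q ^ m := by
      rw [zpow_add_one₀ hq0' m, mul_comm]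
    rw [hz, show q * (q * (q:ℝ) ^ m) = q ^ 2 * q ^ m by ring]
    exact wStep (q ^ m)
  have hconst : ∀ m : ℤ, ∀ k : ℕ,
      q ^ (-(2 * ν)) * jR q ν (q ^ m) * jR q (-ν) (q ^ (-ν) * (q * q ^ m))
        - jR q ν (q * q ^ m) * jR q (-ν) (q ^ (-ν) * q ^ m)
      = q ^ (-(2 * ν)) * jR q ν (q ^ (m + k)) * jR q (-ν) (q ^ (-ν) * (q * q ^ (m + k)))
        - jR q ν (q * q ^ (m + k)) * jR q (-ν) (q ^ (-ν) * q ^ (m + k)) := by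
    intro m k
    induction k with
    | zero => simp
    | succ k ih =>
        rw [ih, hstep (m + k), show (m + (k : ℤ)) + 1 = m + ((k : ℕ) + 1 : ℕ) by push_cast; ring]
  -- the limit
  have hval : ∀ m : ℤ,
      q ^ (-(2 * ν)) * jR q ν (q ^ m) * jR q (-ν) (q ^ (-ν) * (q * q ^ m))
        - jR q ν (q * q ^ m) * jR q (-ν) (q ^ (-ν) * q ^ m)
      = q ^ (-(2 * ν)) - 1 := by
    intro m
    have hz : ∀ k : ℕ, (q : ℝ) ^ (m + (k : ℤ)) = q ^ m * q ^ k := by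
      intro k
      rw [zpow_add₀ hq0', zpow_natCast]
    have T1 : Tendsto (fun k : ℕ => jR q ν (q ^ (m + (k : ℤ)))) atTop (nhds 1) :=
      tendsto_jR hq0 hq1 hτν _ (q ^ m) fun k => hz k
    have T2 : Tendsto (fun k : ℕ => jR q (-ν) (q ^ (-ν) * (q * q ^ (m + (k : ℤ)))))
        atTop (nhds 1) :=
      tendsto_jR hq0 hq1 hτν' _ (q ^ (-ν) * (q * q ^ m)) fun k => by rw [hz k]; ring
    have T3 : Tendsto (fun k : ℕ => jR q ν (q * q ^ (m + (k : ℤ)))) atTop (nhds 1) :=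
      tendsto_jR hq0 hq1 hτν _ (q * q ^ m) fun k => by rw [hz k]; ring
    have T4 : Tendsto (fun k : ℕ => jR q (-ν) (q ^ (-ν) * q ^ (m + (k : ℤ)))) atTop (nhds 1) :=
      tendsto_jR hq0 hq1 hτν' _ (q ^ (-ν) * q ^ m) fun k => by rw [hz k]; ring
    have hT : Tendsto (fun k : ℕ =>
        q ^ (-(2 * ν)) * jR q ν (q ^ (m + (k : ℤ)))
            * jR q (-ν) (q ^ (-ν) * (q * q ^ (m + (k : ℤ))))
          - jR q ν (q * q ^ (m + (k : ℤ))) * jR q (-ν) (q ^ (-ν) * q ^ (m + (k : ℤ))))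
        atTop (nhds (q ^ (-(2 * ν)) - 1)) := by
      have := ((T1.const_mul (q ^ (-(2 * ν)))).mul T2).sub (T3.mul T4)
      rw [show q ^ (-(2 * ν)) * 1 * 1 - 1 * 1 = q ^ (-(2 * ν)) - 1 by ring] at this
      exact this
    exact tendsto_nhds_unique (tendsto_const_nhds.congr fun k => hconst m k) hT
  -- final assembly
  intro n
  have hxpos : (0 : ℝ) < q ^ n := zpow_pos hq0 n
  have r1 : ((q : ℝ) ^ n) ^ (2 * ν) * ((q : ℝ) ^ n) ^ (-(2 * ν)) = 1 := by
    rw [← Real.rpow_add hxpos]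
    simp
  have r2 : ((q * q ^ n : ℝ)) ^ (-(2 * ν)) = q ^ (-(2 * ν)) * ((q : ℝ) ^ n) ^ (-(2 * ν)) :=
    Real.mul_rpow hq0.le hxpos.le
  simp only [gammaR]
  rw [r2]
  linear_combination (((q : ℝ) ^ n) ^ (2 * ν) * ((q : ℝ) ^ n) ^ (-(2 * ν))) * hval n
    + (q ^ (-(2 * ν)) - 1) * r1
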